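/- Let P = Σ_{a ∈ S} μ_a Δ_{I(a)} ⊆ ℝ^{n+1} with μ_a > 0 and I(a) nonempty, and let r(I) = Σ_{a : I(a) ∩ I ≠ ∅} μ_a. Then P = {x ∈ ℝ^{n+1} : x_i ≥ 0 for all i, Σ_{i ∈ {0,…,n}} x_i = r({0,…,n}), and Σ_{i ∈ I} x_i ≤ r(I) for all I ⊆ {0,…,n}}. -/

import Mathlib

open Pointwise

private lemma simplex_hull_subset {m : ℕ} (T : Finset (Fin m)) :
    convexHull ℝ ((fun i => Pi.single i (1 : ℝ)) '' (T : Set (Fin m))) ⊆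
      {z : Fin m → ℝ | (∀ i, 0 ≤ z i) ∧ (∑ i, z i) = 1 ∧ ∀ i ∉ T, z i = 0} := by
  apply convexHull_min
  · rintro z ⟨i, hi, rfl⟩
    refine ⟨fun j => ?_, ?_, fun j hj => ?_⟩
    · rcases eq_or_ne j i with rfl | h
      · simp
      · simp [Pi.single_apply, h]
    · simp [Pi.single_apply]
    · have : j ≠ i := fun h => hj (h ▸ hi)
      simp [Pi.single_apply, this]
  · rintro z1 ⟨h1, hs1, hz1⟩ z2 ⟨h2, hs2, hz2⟩ s t hs ht hst
    refine ⟨fun i => ?_, ?_, fun i hi => ?_⟩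
    · have := h1 i; have := h2 i
      simp only [Pi.add_apply, Pi.smul_apply, smul_eq_mul]
      nlinarith
    · simp only [Pi.add_apply, Pi.smul_apply, smul_eq_mul]
      rw [Finset.sum_add_distrib, ← Finset.mul_sum, ← Finset.mul_sum, hs1, hs2]
      linarith
    · simp [hz1 i hi, hz2 i hi]

open Finset in
private lemma key_ineq (n : ℕ) {α : Type*} [Fintype α]
    (μ : α → ℝ) (I : α → Finset (Fin (n + 1))) (hI : ∀ a, (I a).Nonempty)
    (x : Fin (n + 1) → ℝ)
    (hsum : ∀ J : Finset (Fin (n + 1)),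
      ∑ i ∈ J, x i ≤ ∑ a ∈ Finset.univ.filter (fun a => (I a ∩ J).Nonempty), μ a)
    (htot : ∑ i, x i = ∑ a, μ a) :
    ∀ (k : ℕ) (c : Fin (n + 1) → ℝ), (Finset.image c Finset.univ).card ≤ k →
      ∑ i, c i * x i ≤ ∑ a, μ a * (I a).sup' (hI a) c := by
  classical
  intro k
  induction k with
  | zero =>
    intro c hc
    have hne : (Finset.image c Finset.univ).Nonempty :=
      ⟨c 0, Finset.mem_image_of_mem c (Finset.mem_univ 0)⟩
    exact absurd (lt_of_lt_of_le hne.card_pos hc) (lt_irrefl 0)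
  | succ k ih =>
    intro c hc
    by_cases hcard : (Finset.image c Finset.univ).card ≤ 1
    · -- constant case
      have hne : (Finset.image c Finset.univ).Nonempty :=
        ⟨c 0, Finset.mem_image_of_mem c (Finset.mem_univ 0)⟩
      obtain ⟨v, hv⟩ := Finset.card_eq_one.1 (le_antisymm hcard hne.card_pos)
      have hcv : ∀ i, c i = v := fun i => by
        have := Finset.mem_image_of_mem c (Finset.mem_univ i)
        rw [hv, Finset.mem_singleton] at this; exact this
      have h1 : ∑ i, c i * x i = v * ∑ i, x i := by
        rw [Finset.mul_sum]; exact Finset.sum_congr rfl fun i _ => by rw [hcv i]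
      have h2 : ∀ a, (I a).sup' (hI a) c = v := fun a => by
        rw [Finset.sup'_congr (hI a) rfl fun i _ => hcv i, Finset.sup'_const]
      rw [h1, htot, Finset.mul_sum]
      exact le_of_eq (Finset.sum_congr rfl fun a _ => by rw [h2 a, mul_comm])
    · -- step case
      push_neg at hcard
      set V := Finset.image c Finset.univ with hV
      have hVne : V.Nonempty := ⟨c 0, Finset.mem_image_of_mem c (Finset.mem_univ 0)⟩
      set v1 := V.min' hVne with hv1
      have hv1V : v1 ∈ V := V.min'_mem hVne
      have hTne : (V.erase v1).Nonempty := by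
        rw [← Finset.card_pos, Finset.card_erase_of_mem hv1V]; omega
      set v2 := (V.erase v1).min' hTne with hv2
      have hv2T : v2 ∈ V.erase v1 := (V.erase v1).min'_mem hTne
      have hv12 : v1 < v2 :=
        lt_of_le_of_ne (V.min'_le v2 (Finset.mem_of_mem_erase hv2T))
          (Ne.symm (Finset.ne_of_mem_erase hv2T))
      have hcmem : ∀ i, c i ∈ V := fun i => Finset.mem_image_of_mem c (Finset.mem_univ i)
      have hge1 : ∀ i, v1 ≤ c i := fun i => V.min'_le _ (hcmem i)
      have hge2 : ∀ i, c i ≠ v1 → v2 ≤ c i := fun i hi =>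
        (V.erase v1).min'_le _ (Finset.mem_erase.2 ⟨hi, hcmem i⟩)
      set c' := fun i => if c i = v1 then v2 else c i with hc'
      have hcle : ∀ i, c i ≤ c' i := fun i => by
        by_cases h : c i = v1 <;> simp [hc', h]
        linarith
      have himg : Finset.image c' Finset.univ ⊆ V.erase v1 := by
        intro v hv
        obtain ⟨i, -, rfl⟩ := Finset.mem_image.1 hv
        by_cases h : c i = v1
        · simpa [hc', h] using hv2T
        · simp only [hc', h, if_false]
          exact Finset.mem_erase.2 ⟨h, hcmem i⟩
      have hcard' : (Finset.image c' Finset.univ).card ≤ k := by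
        have := Finset.card_le_card himg
        rw [Finset.card_erase_of_mem hv1V] at this
        omega
      set K := Finset.univ.filter (fun i => c i = v1) with hK
      -- Fact A
      have hKc : ∀ a : α, (¬ (I a ∩ Kᶜ).Nonempty) ↔ I a ⊆ K := by
        intro a
        simp only [Finset.not_nonempty_iff_eq_empty, Finset.eq_empty_iff_forall_notMem,
          Finset.mem_inter, Finset.mem_compl, Finset.subset_iff, not_and, not_not]
      have factA : ∑ a ∈ Finset.univ.filter (fun a => I a ⊆ K), μ a ≤ ∑ i ∈ K, x i := by
        have h1 := hsum Kᶜ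
        have h2 : ∑ i ∈ K, x i + ∑ i ∈ Kᶜ, x i = ∑ a, μ a := by
          rw [Finset.sum_add_sum_compl, htot]
        have h3 : ∑ a ∈ Finset.univ.filter (fun a => (I a ∩ Kᶜ).Nonempty), μ a
            + ∑ a ∈ Finset.univ.filter (fun a => I a ⊆ K), μ a = ∑ a, μ a := by
          rw [← Finset.sum_filter_add_sum_filter_not Finset.univ
            (fun a => (I a ∩ Kᶜ).Nonempty) μ]
          congr 1
          exact Finset.sum_congr (Finset.filter_congr fun a _ => by rw [hKc a]) fun _ _ => rfl
        linarith
      -- sup facts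
      have hsupK : ∀ a, I a ⊆ K → (I a).sup' (hI a) c = v1 ∧ (I a).sup' (hI a) c' = v2 := by
        intro a ha
        have hval : ∀ i ∈ I a, c i = v1 := fun i hi => (Finset.mem_filter.1 (ha hi)).2
        constructor
        · rw [show (I a).sup' (hI a) c = (I a).sup' (hI a) (fun _ => v1) from
            Finset.sup'_congr (hI a) rfl hval, Finset.sup'_const]
        · rw [show (I a).sup' (hI a) c' = (I a).sup' (hI a) (fun _ => v2) from
            Finset.sup'_congr (hI a) rfl (fun i hi => by simp [hc', hval i hi]),
            Finset.sup'_const]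
      have hsupN : ∀ a, ¬ I a ⊆ K → (I a).sup' (hI a) c' = (I a).sup' (hI a) c := by
        intro a ha
        obtain ⟨i0, hi0, hi0K⟩ := Finset.not_subset.1 ha
        have hi0v : c i0 ≠ v1 := by
          intro h; exact hi0K (Finset.mem_filter.2 ⟨Finset.mem_univ _, h⟩)
        apply le_antisymm
        · apply Finset.sup'_le
          intro j hj
          by_cases h : c j = v1
          · calc c' j = v2 := by simp [hc', h]
              _ ≤ c i0 := hge2 i0 hi0v
              _ ≤ _ := Finset.le_sup' c hi0
          · calc c' j = c j := by simp [hc', h]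
              _ ≤ _ := Finset.le_sup' c hj
        · exact Finset.sup'_le _ _ fun j hj => le_trans (hcle j) (Finset.le_sup' c' hj)
      -- rewrite sum with c'
      have hxrw : ∑ i, c i * x i = ∑ i, c' i * x i - (v2 - v1) * ∑ i ∈ K, x i := by
        rw [Finset.mul_sum, hK, Finset.sum_filter, ← Finset.sum_sub_distrib]
        apply Finset.sum_congr rfl
        intro i _
        by_cases h : c i = v1 <;> simp [hc', h] <;> ring
      have hsupRw : ∑ a, μ a * (I a).sup' (hI a) c' =
          ∑ a, μ a * (I a).sup' (hI a) c
            + (v2 - v1) * ∑ a ∈ Finset.univ.filter (fun a => I a ⊆ K), μ a := by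
        rw [Finset.mul_sum, Finset.sum_filter, ← Finset.sum_add_distrib]
        apply Finset.sum_congr rfl
        intro a _
        by_cases h : I a ⊆ K
        · obtain ⟨e1, e2⟩ := hsupK a h
          simp only [h, if_true, e1, e2]; ring
        · simp only [h, if_false, hsupN a h, add_zero]
      have hIH := ih c' hcard'
      rw [hxrw, hsupRw] at *
      have := mul_le_mul_of_nonneg_left factA (le_of_lt (sub_pos.2 hv12))
      linarith

/-- The Minkowski sum of dilated simplices `P = Σ_a μ_a Δ_{I(a)}` equals the polymatroid
base polytope of the rank function `r(I) = Σ_{a : I(a) ∩ I ≠ ∅} μ_a`. -/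
theorem minkowski_sum_eq_base_polytope (n : ℕ) {α : Type*} [Fintype α]
    (μ : α → ℝ) (hμ : ∀ a, 0 < μ a)
    (I : α → Finset (Fin (n + 1))) (hI : ∀ a, (I a).Nonempty)
    (r : Finset (Fin (n + 1)) → ℝ)
    (hr : ∀ J, r J = ∑ a ∈ Finset.univ.filter (fun a => (I a ∩ J).Nonempty), μ a) :
    (∑ a : α, μ a • convexHull ℝ
        ((fun i => Pi.single i (1 : ℝ)) '' ((I a : Set (Fin (n + 1)))))) =
      {x : Fin (n + 1) → ℝ | (∀ i, 0 ≤ x i) ∧ (∑ i, x i) = r Finset.univ ∧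
        ∀ J : Finset (Fin (n + 1)), ∑ i ∈ J, x i ≤ r J} := by
  have key : ∀ (x : Fin (n + 1) → ℝ),
      (∀ J : Finset (Fin (n + 1)),
        ∑ i ∈ J, x i ≤ ∑ a ∈ Finset.univ.filter (fun a => (I a ∩ J).Nonempty), μ a) →
      (∑ i, x i = ∑ a, μ a) →
      ∀ (c : Fin (n + 1) → ℝ), ∑ i, c i * x i ≤ ∑ a, μ a * (I a).sup' (hI a) c := by
    intro x hsum htot c
    exact key_ineq n μ I hI x hsum htot (Finset.image c Finset.univ).card c le_rfl
  apply Set.Subset.antisymm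
  · -- forward inclusion
    classical
    have hfu : Finset.univ.filter (fun a : α => (I a ∩ Finset.univ).Nonempty) = Finset.univ :=
      Finset.filter_true_of_mem fun a _ => by simpa using hI a
    intro x hx
    rw [Set.mem_fintype_sum] at hx
    obtain ⟨g, hg, hgs⟩ := hx
    choose z hz hgz using fun a => Set.mem_smul_set.1 (hg a)
    have hprop := fun a => simplex_hull_subset (I a) (hz a)
    have hxi : ∀ i, x i = ∑ a, μ a * z a i := by
      intro i
      rw [← hgs, Finset.sum_apply]
      exact Finset.sum_congr rfl fun a _ => by rw [← hgz a]; rfl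
    refine ⟨fun i => ?_, ?_, fun J => ?_⟩
    · rw [hxi i]
      exact Finset.sum_nonneg fun a _ => mul_nonneg (hμ a).le ((hprop a).1 i)
    · rw [hr, hfu]
      simp_rw [hxi]
      rw [Finset.sum_comm]
      exact Finset.sum_congr rfl fun a _ => by rw [← Finset.mul_sum, (hprop a).2.1, mul_one]
    · rw [hr, Finset.sum_filter]
      simp_rw [hxi]
      rw [Finset.sum_comm]
      apply Finset.sum_le_sum
      intro a _
      by_cases h : (I a ∩ J).Nonempty
      · simp only [h, if_true]
        rw [← Finset.mul_sum]
        apply mul_le_of_le_one_right (hμ a).le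
        calc ∑ i ∈ J, z a i ≤ ∑ i, z a i :=
              Finset.sum_le_sum_of_subset_of_nonneg (Finset.subset_univ J)
                (fun i _ _ => (hprop a).1 i)
          _ = 1 := (hprop a).2.1
      · simp only [h, if_false]
        have : ∀ i ∈ J, μ a * z a i = 0 := by
          intro i hi
          have hiI : i ∉ I a := fun hiI => h ⟨i, Finset.mem_inter.2 ⟨hiI, hi⟩⟩
          rw [(hprop a).2.2 i hiI, mul_zero]
        rw [Finset.sum_congr rfl this]
        simp
  · -- reverse inclusion
    classical
    have hfu : Finset.univ.filter (fun a : α => (I a ∩ Finset.univ).Nonempty) = Finset.univ :=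
      Finset.filter_true_of_mem fun a _ => by simpa using hI a
    set S := (∑ a : α, μ a • convexHull ℝ
        ((fun i => Pi.single i (1 : ℝ)) '' ((I a : Set (Fin (n + 1)))))) with hS
    have hconv : Convex ℝ S := by
      apply Finset.sum_induction _ (Convex ℝ)
      · exact fun s t hs ht => hs.add ht
      · rw [← Set.singleton_zero]; exact convex_singleton 0
      · exact fun a _ => (convex_convexHull ℝ _).smul (μ a)
    have hcomp : IsCompact S := by
      apply Finset.sum_induction _ IsCompact
      · exact fun s t hs ht => hs.add ht
      · rw [← Set.singleton_zero]; exact isCompact_singleton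
      · intro a _
        exact (((I a : Set (Fin (n + 1))).toFinite.image _).isCompact_convexHull (𝕜 := ℝ)).smul (μ a)
    rintro x ⟨hx0, hxt, hxJ⟩
    by_contra hmem
    obtain ⟨f, u, hfu', hux⟩ := geometric_hahn_banach_closed_point hconv hcomp.isClosed hmem
    set c : Fin (n + 1) → ℝ := fun i => f (Pi.single i 1) with hc
    have hfy : ∀ y : Fin (n + 1) → ℝ, f y = ∑ i, c i * y i := by
      intro y
      have hy : y = ∑ i, y i • (Pi.single i 1 : Fin (n + 1) → ℝ) := by
        funext j
        simp [Finset.sum_apply, Pi.single_apply, Finset.sum_ite_eq']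
      conv_lhs => rw [hy]
      rw [map_sum]
      exact Finset.sum_congr rfl fun i _ => by rw [map_smul]; simp [hc, mul_comm]
    choose im him hsup using fun a => Finset.exists_mem_eq_sup' (hI a) c
    set p : Fin (n + 1) → ℝ := ∑ a, μ a • (Pi.single (im a) 1 : Fin (n + 1) → ℝ) with hp
    have hpS : p ∈ S := by
      rw [hS, Set.mem_fintype_sum]
      exact ⟨fun a => μ a • (Pi.single (im a) 1 : Fin (n + 1) → ℝ),
        fun a => Set.smul_mem_smul_set (subset_convexHull ℝ _ ⟨im a, him a, rfl⟩), rfl⟩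
    have hfp : f p = ∑ a, μ a * (I a).sup' (hI a) c := by
      rw [hp, map_sum]
      refine Finset.sum_congr rfl fun a _ => ?_
      rw [map_smul, hsup a]; simp [hc]
    have hxc : ∑ i, c i * x i ≤ ∑ a, μ a * (I a).sup' (hI a) c := by
      apply key x
      · intro J; rw [← hr J]; exact hxJ J
      · rw [hxt, hr, hfu]

    have h1 : f p < u := hfu' p hpS
    have h2 : u < f x := hux
    rw [hfy x] at h2
    rw [hfp] at h1
    linarith
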